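/- Lemma (nonsingularity of the joint covariance for rectangular kernels). Assume (A1), (A2), (A5), and that the weights satisfy w_{l,i} w_{m,i} = w_{l,i} for all l ≤ m and all i. Then D_l Σ D_mᵀ = B_{max(l,m)}⁻¹ for all l, m, so 𝚺_k is the k×k block matrix whose (l,m)-th p×p block is B_{max(l,m)}⁻¹; moreover for every k = 2, …, K, det 𝚺_k = det(B_k⁻¹) · ∏_{l=2}^{k} det(B_{l−1}⁻¹ − B_l⁻¹) > 0, and in particular 𝚺_k is nonsingular. -/

import Mathlib

open MeasureTheory ProbabilityTheory Matrix Real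

noncomputable section


open Matrix

namespace SpatialAdaptAux

/-- Telescoping sum. -/
lemma tele_sum (g : ℕ → ℝ) {m k : ℕ} (hm : m < k) :
    ∑ c ∈ Finset.range k, (if m ≤ c then g (c + 1) - g (c + 2) else 0)
      = g (m + 1) - g (k + 1) := by
  induction k with
  | zero => omega
  | succ j ih =>
    rw [Finset.sum_range_succ]
    rcases Nat.lt_or_ge m j with hj | hj
    · rw [ih hj, if_pos (by omega)]
      ring_nf
    · have hmj : m = j := by omega
      subst hmj
      rw [if_pos le_rfl, Finset.sum_eq_zero, zero_add]
      intro c hc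
      rw [if_neg (by simp at hc; omega)]

/-- Determinant of the block matrix whose `(a,b)` block is `A (max a b + 1)`. -/
lemma det_max_block {k p : ℕ} (A : ℕ → Matrix (Fin p) (Fin p) ℝ)
    (hA0 : A (k + 1) = 0) :
    (Matrix.of fun (x y : Fin k × Fin p) => A (max x.1.1 y.1.1 + 1) x.2 y.2).det
      = ∏ c : Fin k, (A ((c : ℕ) + 1) - A ((c : ℕ) + 2)).det := by
  classical
  set L : Matrix (Fin k × Fin p) (Fin k × Fin p) ℝ :=
    Matrix.of fun x y => if x.1 ≤ y.1 ∧ x.2 = y.2 then (1 : ℝ) else 0 with hL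
  set Dg : Matrix (Fin k × Fin p) (Fin k × Fin p) ℝ :=
    Matrix.of fun x y => if x.1 = y.1 then (A ((x.1 : ℕ) + 1) - A ((x.1 : ℕ) + 2)) x.2 y.2 else 0
    with hDg
  have hLD : ∀ (x z : Fin k × Fin p), (L * Dg) x z
      = if x.1 ≤ z.1 then (A ((z.1 : ℕ) + 1) - A ((z.1 : ℕ) + 2)) x.2 z.2 else 0 := by
    intro x z
    rw [Matrix.mul_apply, Fintype.sum_prod_type]
    rw [Finset.sum_eq_single z.1]
    · rw [Finset.sum_eq_single x.2]
      · simp only [hL, hDg, Matrix.of_apply]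
        by_cases h : x.1 ≤ z.1 <;> simp [h]
      · intro s _ hs
        simp only [hL, Matrix.of_apply]
        rw [if_neg (fun hh => hs hh.2.symm), zero_mul]
      · intro h
        exact absurd (Finset.mem_univ _) h
    · intro c _ hc
      refine Finset.sum_eq_zero fun s _ => ?_
      simp only [hDg, Matrix.of_apply]
      rw [if_neg hc, mul_zero]
    · intro h
      exact absurd (Finset.mem_univ _) h
  have hfact : (Matrix.of fun (x y : Fin k × Fin p) => A (max x.1.1 y.1.1 + 1) x.2 y.2)
      = L * Dg * Lᵀ := by
    ext x y
    have hmul : (L * Dg * Lᵀ) x y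
        = ∑ c : Fin k, (if x.1 ≤ c then (if y.1 ≤ c
            then (A ((c : ℕ) + 1) - A ((c : ℕ) + 2)) x.2 y.2 else 0) else 0) := by
      rw [Matrix.mul_apply, Fintype.sum_prod_type]
      refine Finset.sum_congr rfl fun c _ => ?_
      rw [Finset.sum_eq_single y.2]
      · rw [hLD x (c, y.2)]
        simp only [Matrix.transpose_apply, hL, Matrix.of_apply]
        by_cases h1 : x.1 ≤ c <;> by_cases h2 : y.1 ≤ c <;> simp [h1, h2]
      · intro s _ hs
        simp only [Matrix.transpose_apply, hL, Matrix.of_apply]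
        rw [if_neg (fun hh => hs hh.2.symm), mul_zero]
      · intro h
        exact absurd (Finset.mem_univ _) h
    rw [hmul]
    have hsum : ∑ c : Fin k, (if x.1 ≤ c then (if y.1 ≤ c
            then (A ((c : ℕ) + 1) - A ((c : ℕ) + 2)) x.2 y.2 else 0) else 0)
        = ∑ c ∈ Finset.range k, (if max x.1.1 y.1.1 ≤ c
            then (fun j => A j x.2 y.2) (c + 1) - (fun j => A j x.2 y.2) (c + 2) else 0) := by
      rw [← Fin.sum_univ_eq_sum_range]
      refine Finset.sum_congr rfl fun c _ => ?_
      by_cases h1 : x.1 ≤ c <;> by_cases h2 : y.1 ≤ c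
      · have h1' : (x.1 : ℕ) ≤ (c : ℕ) := h1
        have h2' : (y.1 : ℕ) ≤ (c : ℕ) := h2
        rw [if_pos h1, if_pos h2, if_pos (max_le h1' h2'), Matrix.sub_apply]
      · have h2' : ¬ (y.1 : ℕ) ≤ (c : ℕ) := h2
        rw [if_pos h1, if_neg h2, if_neg (by omega)]
      · have h1' : ¬ (x.1 : ℕ) ≤ (c : ℕ) := h1
        rw [if_neg h1, if_neg (by omega)]
      · have h1' : ¬ (x.1 : ℕ) ≤ (c : ℕ) := h1
        rw [if_neg h1, if_neg (by omega)]
    rw [hsum, tele_sum (fun j => A j x.2 y.2) (max_lt x.1.isLt y.1.isLt)]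
    simp [hA0]
  rw [hfact]
  have hLtri : L.BlockTriangular Prod.fst := by
    intro x y hxy
    simp only [hL, Matrix.of_apply]
    rw [if_neg]
    exact fun h => absurd h.1 (not_le.mpr hxy)
  have hLdet : L.det = 1 := by
    rw [hLtri.det]
    refine Finset.prod_eq_one fun a _ => ?_
    have h1 : L.toSquareBlock Prod.fst a = 1 := by
      ext x y
      rcases x with ⟨x, hx⟩
      rcases y with ⟨y, hy⟩
      simp only [Matrix.toSquareBlock_def, hL, Matrix.of_apply, Matrix.one_apply,
        Subtype.mk.injEq]
      by_cases h : x.2 = y.2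
      · rw [if_pos ⟨le_of_eq (hx.trans hy.symm), h⟩, if_pos (Prod.ext (hx.trans hy.symm) h)]
      · rw [if_neg (fun hh => h hh.2), if_neg (fun hh => h (by rw [hh]))]
    rw [h1, Matrix.det_one]
  have hDgdet : Dg.det = ∏ c : Fin k, (A ((c : ℕ) + 1) - A ((c : ℕ) + 2)).det := by
    have h2 : Dg = (Matrix.blockDiagonal fun c : Fin k =>
        A ((c : ℕ) + 1) - A ((c : ℕ) + 2)).submatrix
        (Equiv.prodComm (Fin k) (Fin p)) (Equiv.prodComm (Fin k) (Fin p)) := by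
      ext x y
      simp only [hDg, Matrix.of_apply, Matrix.submatrix_apply, Equiv.prodComm_apply,
        Prod.swap_prod_mk, Matrix.blockDiagonal_apply]
      rcases eq_or_ne x.1 y.1 with h | h
      · simp [h]
      · simp [h]
    rw [h2, Matrix.det_submatrix_equiv_self, Matrix.det_blockDiagonal]
  rw [Matrix.det_mul, Matrix.det_mul, Matrix.det_transpose, hLdet, hDgdet, one_mul, mul_one]

end SpatialAdaptAux

namespace SpatialAdapt

/-- The law `N(m, diag(s i ^ 2))` on `ℝ^n`: product of independent one-dimensional Gaussians. -/
def gaussianVec (n : ℕ) (m s : Fin n → ℝ) : Measure (Fin n → ℝ) :=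
  Measure.pi fun i => gaussianReal (m i) (Real.toNNReal (s i ^ 2))

/-- Löwner partial order on symmetric matrices: `A ⪯ B` iff `B - A` is positive semidefinite. -/
def LoewnerLE {ι : Type*} [Fintype ι] (A B : Matrix ι ι ℝ) : Prop :=
  (B - A).PosSemidef

/-- Diagonal covariance matrix `diag(s i ^ 2)`. -/
def covMat (n : ℕ) (s : Fin n → ℝ) : Matrix (Fin n) (Fin n) ℝ :=
  Matrix.diagonal fun i => s i ^ 2

/-- `W = Σ^{-1/2} 𝒲 Σ^{-1/2} = diag(w i / σ i ^ 2)`. -/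
def Wmat (n : ℕ) (σv : Fin n → ℝ) (w : Fin n → ℝ) : Matrix (Fin n) (Fin n) ℝ :=
  Matrix.diagonal fun i => w i / σv i ^ 2

/-- `B = Ψ W Ψᵀ`. -/
def Bmat (n p : ℕ) (σv : Fin n → ℝ) (Ψ : Matrix (Fin p) (Fin n) ℝ) (w : Fin n → ℝ) :
    Matrix (Fin p) (Fin p) ℝ :=
  Ψ * Wmat n σv w * Ψᵀ

/-- `D = B⁻¹ Ψ W`. -/
def Dmat (n p : ℕ) (σv : Fin n → ℝ) (Ψ : Matrix (Fin p) (Fin n) ℝ) (w : Fin n → ℝ) :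
    Matrix (Fin p) (Fin n) ℝ :=
  (Bmat n p σv Ψ w)⁻¹ * Ψ * Wmat n σv w

/-- The quasi-MLE `θ̃ = B⁻¹ Ψ W y`. -/
def thetaTilde (n p : ℕ) (σv : Fin n → ℝ) (Ψ : Matrix (Fin p) (Fin n) ℝ) (w : Fin n → ℝ)
    (y : Fin n → ℝ) : Fin p → ℝ :=
  (Dmat n p σv Ψ w).mulVec y

/-- Quadratic form `v ⬝ B v`. -/
def quadForm {p : ℕ} (B : Matrix (Fin p) (Fin p) ℝ) (v : Fin p → ℝ) : ℝ :=
  v ⬝ᵥ B.mulVec v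

/-- The test statistic `T_{lm} = (θ̃_l - θ̃_m)ᵀ B_l (θ̃_l - θ̃_m)`. -/
def Tstat (n p : ℕ) (σv : Fin n → ℝ) (Ψ : Matrix (Fin p) (Fin n) ℝ) (w : ℕ → Fin n → ℝ)
    (l m : ℕ) (y : Fin n → ℝ) : ℝ :=
  quadForm (Bmat n p σv Ψ (w l))
    (thetaTilde n p σv Ψ (w l) y - thetaTilde n p σv Ψ (w m) y)

/-- The adaptive index `k̂ = max {k ≤ K : T_{lm} ≤ z_l for all 1 ≤ l < m ≤ k}`. -/
def khat (n p K : ℕ) (σv : Fin n → ℝ) (Ψ : Matrix (Fin p) (Fin n) ℝ) (w : ℕ → Fin n → ℝ)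
    (z : ℕ → ℝ) (y : Fin n → ℝ) : ℕ :=
  sSup {k | k ≤ K ∧ ∀ l m, 1 ≤ l → l < m → m ≤ k → Tstat n p σv Ψ w l m y ≤ z l}

/-- The adaptive estimator `θ̂ = θ̃_{k̂}`. -/
def thetaHat (n p K : ℕ) (σv : Fin n → ℝ) (Ψ : Matrix (Fin p) (Fin n) ℝ) (w : ℕ → Fin n → ℝ)
    (z : ℕ → ℝ) (y : Fin n → ℝ) : Fin p → ℝ :=
  thetaTilde n p σv Ψ (w (khat n p K σv Ψ w z y)) y

/-- The last accepted estimator after `k` steps: `θ̂_k = θ̃_{min(k, k̂)}`. -/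
def thetaHatStep (n p K : ℕ) (σv : Fin n → ℝ) (Ψ : Matrix (Fin p) (Fin n) ℝ)
    (w : ℕ → Fin n → ℝ) (z : ℕ → ℝ) (k : ℕ) (y : Fin n → ℝ) : Fin p → ℝ :=
  thetaTilde n p σv Ψ (w (min k (khat n p K σv Ψ w z y))) y

/-- `C(p, r) = E|χ²_p|^r = 2^r Γ(r + p/2) / Γ(p/2)`. -/
def Cpr (p : ℕ) (r : ℝ) : ℝ :=
  2 ^ r * Real.Gamma (r + p / 2) / Real.Gamma (p / 2)

/-- `P(χ²_p ≥ t)`, the tail of the chi-squared distribution with `p` degrees of freedom. -/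
def chiSqTail (p : ℕ) (t : ℝ) : ℝ :=
  ((Measure.pi fun _ : Fin p => gaussianReal 0 1) {x | t ≤ ∑ i, x i ^ 2}).toReal

/-- The `pk × pk` joint covariance `𝔻_k (J_k ⊗ Σm) 𝔻_kᵀ`, whose `(l, m)` block
is `D_l Σm D_mᵀ` (blocks are indexed by `1, …, k`, i.e. by `Fin k` shifted by one). -/
def jointCov (n p : ℕ) (σv σm : Fin n → ℝ) (Ψ : Matrix (Fin p) (Fin n) ℝ)
    (w : ℕ → Fin n → ℝ) (k : ℕ) : Matrix (Fin k × Fin p) (Fin k × Fin p) ℝ :=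
  Matrix.of fun a b =>
    (Dmat n p σv Ψ (w (a.1 + 1)) * covMat n σm * (Dmat n p σv Ψ (w (b.1 + 1)))ᵀ) a.2 b.2

/-- The stacked bias vector `b(k) = (θ̄_1 - θ, …, θ̄_k - θ)`. -/
def biasVec (n p : ℕ) (σv : Fin n → ℝ) (Ψ : Matrix (Fin p) (Fin n) ℝ) (w : ℕ → Fin n → ℝ)
    (k : ℕ) (f : Fin n → ℝ) (θ : Fin p → ℝ) : Fin k × Fin p → ℝ :=
  fun a => (thetaTilde n p σv Ψ (w (a.1 + 1)) f - θ) a.2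

/-- The modeling bias `Δ(k) = b(k)ᵀ 𝚺_k⁻¹ b(k)`. -/
def DeltaK (n p : ℕ) (σv : Fin n → ℝ) (Ψ : Matrix (Fin p) (Fin n) ℝ) (w : ℕ → Fin n → ℝ)
    (k : ℕ) (f : Fin n → ℝ) (θ : Fin p → ℝ) : ℝ :=
  biasVec n p σv Ψ w k f θ ⬝ᵥ
    (jointCov n p σv σv Ψ w k)⁻¹.mulVec (biasVec n p σv Ψ w k f θ)

/-- The componentwise `k × k` covariance `𝚺_{k,j}` with entries `(D_l Σm D_mᵀ)_{jj}`. -/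
def jointCovComp (n p : ℕ) (σv σm : Fin n → ℝ) (Ψ : Matrix (Fin p) (Fin n) ℝ)
    (w : ℕ → Fin n → ℝ) (k : ℕ) (j : Fin p) : Matrix (Fin k) (Fin k) ℝ :=
  Matrix.of fun a b =>
    (Dmat n p σv Ψ (w (a.1 + 1)) * covMat n σm * (Dmat n p σv Ψ (w (b.1 + 1)))ᵀ) j j

/-- The componentwise bias vector `b_j(k)`. -/
def biasVecComp (n p : ℕ) (σv : Fin n → ℝ) (Ψ : Matrix (Fin p) (Fin n) ℝ)
    (w : ℕ → Fin n → ℝ) (k : ℕ) (f : Fin n → ℝ) (θ : Fin p → ℝ) (j : Fin p) : Fin k → ℝ :=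
  fun a => (thetaTilde n p σv Ψ (w (a.1 + 1)) f - θ) j

/-- The componentwise modeling bias `Δ_j(k) = b_j(k)ᵀ 𝚺_{k,j}⁻¹ b_j(k)`. -/
def DeltaComp (n p : ℕ) (σv : Fin n → ℝ) (Ψ : Matrix (Fin p) (Fin n) ℝ)
    (w : ℕ → Fin n → ℝ) (k : ℕ) (f : Fin n → ℝ) (θ : Fin p → ℝ) (j : Fin p) : ℝ :=
  biasVecComp n p σv Ψ w k f θ j ⬝ᵥ
    (jointCovComp n p σv σv Ψ w k j)⁻¹.mulVec (biasVecComp n p σv Ψ w k f θ j)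

open scoped Classical in
/-- `φ(δ)`: equal to `1` for homogeneous errors, `2(1+δ)/(1-δ)² - 1` otherwise. -/
def varphi (n : ℕ) (σ0 σv : Fin n → ℝ) (δ : ℝ) : ℝ :=
  if ∃ c0 c : ℝ, (∀ i, σ0 i = c0) ∧ (∀ i, σv i = c) then 1
  else 2 * (1 + δ) / (1 - δ) ^ 2 - 1

/-- `σ̄²_max(k) = max_{1 ≤ l ≤ k} σ²_max(l)`. -/
def sbarMax (σmax : ℕ → ℝ) (k : ℕ) : ℝ :=
  sSup (σmax '' Set.Icc 1 k)

/-- Euclidean norm on `ℝ^p`. -/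
def enorm {p : ℕ} (v : Fin p → ℝ) : ℝ :=
  Real.sqrt (∑ i, v i ^ 2)


/-- **Nonsingularity of the joint covariance for rectangular kernels.** Under (A1), (A2),
(A5) and the nested rectangular-kernel condition `w_{l,i} w_{m,i} = w_{l,i}` for `l ≤ m`,
the blocks of `𝚺_k` are `D_l Σ D_mᵀ = B_{max(l,m)}⁻¹`, its determinant factorizes as
`det 𝚺_k = det B_k⁻¹ ∏_{l=2}^k det (B_{l-1}⁻¹ - B_l⁻¹) > 0`, and `𝚺_k` is nonsingular. -/
theorem joint_covariance_nonsingular_rectangular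
    (n p K : ℕ) (hpn : p < n) (hK : 1 ≤ K)
    (σv : Fin n → ℝ) (hσ : ∀ i, 0 < σv i)
    (Ψ : Matrix (Fin p) (Fin n) ℝ) (hA1 : Ψ.rank = p)
    (w : ℕ → Fin n → ℝ)
    (hw : ∀ k, 1 ≤ k → k ≤ K → ∀ i, w k i ∈ Set.Icc (0 : ℝ) 1)
    (hA2 : p ≤ (Finset.univ.filter fun i => 0 < w 1 i).card)
    (hB : ∀ k, 1 ≤ k → k ≤ K → (Bmat n p σv Ψ (w k)).PosDef)
    (u0 u : ℝ) (hu0 : 1 < u0) (hu0u : u0 ≤ u)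
    (hA5 : ∀ k, 2 ≤ k → k ≤ K →
      LoewnerLE (u0 • Bmat n p σv Ψ (w (k - 1))) (Bmat n p σv Ψ (w k)) ∧
      LoewnerLE (Bmat n p σv Ψ (w k)) (u • Bmat n p σv Ψ (w (k - 1))))
    (hrect : ∀ l m, 1 ≤ l → l ≤ m → m ≤ K → ∀ i, w l i * w m i = w l i) :
    (∀ l m, 1 ≤ l → l ≤ K → 1 ≤ m → m ≤ K →
      Dmat n p σv Ψ (w l) * covMat n σv * (Dmat n p σv Ψ (w m))ᵀ =
        (Bmat n p σv Ψ (w (max l m)))⁻¹) ∧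
    (∀ k, 2 ≤ k → k ≤ K →
      (jointCov n p σv σv Ψ w k =
        Matrix.of fun a b =>
          (Bmat n p σv Ψ (w (max (a.1 + 1) (b.1 + 1))))⁻¹ a.2 b.2) ∧
      (jointCov n p σv σv Ψ w k).det =
        (Bmat n p σv Ψ (w k))⁻¹.det *
          ∏ l ∈ Finset.Icc 2 k,
            ((Bmat n p σv Ψ (w (l - 1)))⁻¹ - (Bmat n p σv Ψ (w l))⁻¹).det ∧
      0 < (jointCov n p σv σv Ψ w k).det ∧
      IsUnit (jointCov n p σv σv Ψ w k).det) := by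
  have hσ2 : ∀ i, σv i ^ 2 ≠ 0 := fun i => pow_ne_zero 2 (hσ i).ne'
  have hdet : ∀ l, 1 ≤ l → l ≤ K → IsUnit (Bmat n p σv Ψ (w l)).det :=
    fun l h1 h2 => ((hB l h1 h2).det_pos).ne'.isUnit
  have hWsym : ∀ j, (Wmat n σv (w j))ᵀ = Wmat n σv (w j) := by
    intro j; simp [Wmat]
  have hcovsym : (covMat n σv)ᵀ = covMat n σv := by simp [covMat]
  have hBsym : ∀ l, (Bmat n p σv Ψ (w l))ᵀ = Bmat n p σv Ψ (w l) := by
    intro l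
    simp [Bmat, Wmat, Matrix.transpose_mul, Matrix.mul_assoc]
  have hBinvsym : ∀ l, ((Bmat n p σv Ψ (w l))⁻¹)ᵀ = (Bmat n p σv Ψ (w l))⁻¹ := by
    intro l
    rw [Matrix.transpose_nonsing_inv, hBsym]
  have hW3 : ∀ l m, 1 ≤ l → l ≤ m → m ≤ K →
      Wmat n σv (w l) * covMat n σv * Wmat n σv (w m) = Wmat n σv (w l) := by
    intro l m h1 h2 h3
    simp only [Wmat, covMat, Matrix.diagonal_mul_diagonal]
    refine congrArg Matrix.diagonal ?_
    funext i
    rw [div_mul_cancel₀ _ (hσ2 i), ← mul_div_assoc, hrect l m h1 h2 h3 i]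
  have key_le : ∀ l m, 1 ≤ l → l ≤ m → m ≤ K →
      Dmat n p σv Ψ (w l) * covMat n σv * (Dmat n p σv Ψ (w m))ᵀ =
        (Bmat n p σv Ψ (w m))⁻¹ := by
    intro l m h1 h2 h3
    have h1m : 1 ≤ m := le_trans h1 h2
    have hlK : l ≤ K := le_trans h2 h3
    show (Bmat n p σv Ψ (w l))⁻¹ * Ψ * Wmat n σv (w l) * covMat n σv *
        ((Bmat n p σv Ψ (w m))⁻¹ * Ψ * Wmat n σv (w m))ᵀ = (Bmat n p σv Ψ (w m))⁻¹
    rw [Matrix.transpose_mul, Matrix.transpose_mul, hWsym m, hBinvsym m]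
    simp only [← Matrix.mul_assoc]
    have h4 : (Bmat n p σv Ψ (w l))⁻¹ * Ψ * Wmat n σv (w l) * covMat n σv * Wmat n σv (w m)
        = (Bmat n p σv Ψ (w l))⁻¹ * Ψ * Wmat n σv (w l) := by
      calc (Bmat n p σv Ψ (w l))⁻¹ * Ψ * Wmat n σv (w l) * covMat n σv * Wmat n σv (w m)
          = (Bmat n p σv Ψ (w l))⁻¹ * Ψ *
            (Wmat n σv (w l) * covMat n σv * Wmat n σv (w m)) := by
            simp only [Matrix.mul_assoc]
        _ = (Bmat n p σv Ψ (w l))⁻¹ * Ψ * Wmat n σv (w l) := by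
            rw [hW3 l m h1 h2 h3]
    rw [h4]
    have h5 : (Bmat n p σv Ψ (w l))⁻¹ * Ψ * Wmat n σv (w l) * Ψᵀ
        = (Bmat n p σv Ψ (w l))⁻¹ * (Ψ * Wmat n σv (w l) * Ψᵀ) := by
      simp only [Matrix.mul_assoc]
    rw [h5]
    have h6 : Ψ * Wmat n σv (w l) * Ψᵀ = Bmat n p σv Ψ (w l) := rfl
    rw [h6, Matrix.nonsing_inv_mul _ (hdet l h1 hlK), Matrix.one_mul]
  have part1 : ∀ l m, 1 ≤ l → l ≤ K → 1 ≤ m → m ≤ K →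
      Dmat n p σv Ψ (w l) * covMat n σv * (Dmat n p σv Ψ (w m))ᵀ =
        (Bmat n p σv Ψ (w (max l m)))⁻¹ := by
    intro l m h1 h2 h3 h4
    rcases le_total l m with h | h
    · rw [max_eq_right h]
      exact key_le l m h1 h h4
    · rw [max_eq_left h]
      have hkey := congrArg Matrix.transpose (key_le m l h3 h h2)
      rw [Matrix.transpose_mul, Matrix.transpose_mul, Matrix.transpose_transpose,
        hcovsym, hBinvsym l, ← Matrix.mul_assoc] at hkey
      exact hkey
  refine ⟨part1, ?_⟩
  intro k hk2 hkK
  have hk1 : 1 ≤ k := by omega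
  -- the pos-def difference lemma
  have hΔpos : ∀ l, 2 ≤ l → l ≤ K →
      ((Bmat n p σv Ψ (w (l - 1)))⁻¹ - (Bmat n p σv Ψ (w l))⁻¹).PosDef := by
    intro l hl2 hlK
    have hl1 : 1 ≤ l - 1 := by omega
    have hl1K : l - 1 ≤ K := by omega
    have h1l : 1 ≤ l := by omega
    have hBl := hB l h1l hlK
    have hBl1 := hB (l - 1) hl1 hl1K
    set F : Matrix (Fin p) (Fin n) ℝ :=
      Dmat n p σv Ψ (w (l - 1)) - Dmat n p σv Ψ (w l) with hF
    have hident : (Bmat n p σv Ψ (w (l - 1)))⁻¹ - (Bmat n p σv Ψ (w l))⁻¹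
        = F * covMat n σv * Fᵀ := by
      rw [hF, Matrix.transpose_sub, Matrix.sub_mul, Matrix.mul_sub, Matrix.sub_mul,
        Matrix.sub_mul, part1 (l-1) (l-1) hl1 hl1K hl1 hl1K, part1 l (l-1) h1l hlK hl1 hl1K,
        part1 (l-1) l hl1 hl1K h1l hlK, part1 l l h1l hlK h1l hlK,
        max_self, max_self, max_eq_left (by omega : l - 1 ≤ l),
        max_eq_right (by omega : l - 1 ≤ l)]
      abel
    have h5' : (Bmat n p σv Ψ (w l) - u0 • Bmat n p σv Ψ (w (l - 1))).PosSemidef :=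
      (hA5 l hl2 hlK).1
    have hsm : ((u0 - 1) • Bmat n p σv Ψ (w (l - 1))).PosDef := by
      refine Matrix.posDef_iff_dotProduct_mulVec.mpr ⟨?_, ?_⟩
      · rw [Matrix.IsHermitian, Matrix.conjTranspose_smul, star_trivial,
          hBl1.isHermitian.eq]
      · intro x hx
        rw [Matrix.smul_mulVec, dotProduct_smul, smul_eq_mul]
        exact mul_pos (by linarith) (hBl1.dotProduct_mulVec_pos hx)
    have hCpos : (Bmat n p σv Ψ (w l) - Bmat n p σv Ψ (w (l - 1))).PosDef := by
      have heq : Bmat n p σv Ψ (w l) - Bmat n p σv Ψ (w (l - 1))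
          = (Bmat n p σv Ψ (w l) - u0 • Bmat n p σv Ψ (w (l - 1)))
            + (u0 - 1) • Bmat n p σv Ψ (w (l - 1)) := by
        rw [sub_smul, one_smul]
        abel
      rw [heq]
      exact Matrix.PosDef.posSemidef_add h5' hsm
    refine Matrix.posDef_iff_dotProduct_mulVec.mpr ⟨?_, ?_⟩
    · exact (hBl1.inv.isHermitian).sub (hBl.inv.isHermitian)
    · intro x hx
      have hstar : star x = x := funext fun i => star_trivial _
      have hmv : (F * covMat n σv * Fᵀ) *ᵥ x
          = F *ᵥ (covMat n σv *ᵥ (x ᵥ* F)) := by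
        rw [← Matrix.mulVec_transpose, Matrix.mulVec_mulVec, Matrix.mulVec_mulVec]
      have hqf : x ⬝ᵥ ((Bmat n p σv Ψ (w (l - 1)))⁻¹ - (Bmat n p σv Ψ (w l))⁻¹) *ᵥ x
          = ∑ i, σv i ^ 2 * ((x ᵥ* F) i) ^ 2 := by
        rw [hident, hmv, Matrix.dotProduct_mulVec]
        simp only [dotProduct, covMat, Matrix.mulVec_diagonal]
        exact Finset.sum_congr rfl fun i _ => by ring
      rw [hstar, hqf]
      have hgne : x ᵥ* F ≠ 0 := by
        intro hg0
        have hΔx : ((Bmat n p σv Ψ (w (l - 1)))⁻¹ - (Bmat n p σv Ψ (w l))⁻¹) *ᵥ x = 0 := by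
          rw [hident, hmv, hg0, Matrix.mulVec_zero, Matrix.mulVec_zero]
        have hxy : (Bmat n p σv Ψ (w (l - 1)))⁻¹ *ᵥ x = (Bmat n p σv Ψ (w l))⁻¹ *ᵥ x := by
          rw [Matrix.sub_mulVec, sub_eq_zero] at hΔx
          exact hΔx
        have hby : Bmat n p σv Ψ (w l) *ᵥ ((Bmat n p σv Ψ (w l))⁻¹ *ᵥ x) = x := by
          rw [Matrix.mulVec_mulVec, Matrix.mul_nonsing_inv _ (hdet l h1l hlK),
            Matrix.one_mulVec]
        have hby1 : Bmat n p σv Ψ (w (l - 1)) *ᵥ ((Bmat n p σv Ψ (w l))⁻¹ *ᵥ x) = x := by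
          rw [← hxy, Matrix.mulVec_mulVec,
            Matrix.mul_nonsing_inv _ (hdet (l - 1) hl1 hl1K), Matrix.one_mulVec]
        have hyne : (Bmat n p σv Ψ (w l))⁻¹ *ᵥ x ≠ 0 := by
          intro h0
          apply hx
          rw [← hby, h0, Matrix.mulVec_zero]
        have hpos := hCpos.dotProduct_mulVec_pos hyne
        rw [star_trivial, Matrix.sub_mulVec, hby, hby1, sub_self,
          dotProduct_zero] at hpos
        exact absurd hpos (lt_irrefl 0)
      obtain ⟨i0, hi0⟩ : ∃ i, (x ᵥ* F) i ≠ 0 := by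
        by_contra h
        push_neg at h
        exact hgne (funext h)
      refine Finset.sum_pos' (fun i _ => by positivity) ⟨i0, Finset.mem_univ _, ?_⟩
      have h2 : 0 < ((x ᵥ* F) i0) ^ 2 :=
        lt_of_le_of_ne (sq_nonneg _) (Ne.symm (pow_ne_zero 2 hi0))
      exact mul_pos (pow_pos (hσ i0) 2) h2
  -- block structure
  have hblocks : jointCov n p σv σv Ψ w k =
      Matrix.of fun a b => (Bmat n p σv Ψ (w (max (a.1 + 1) (b.1 + 1))))⁻¹ a.2 b.2 := by
    ext x y
    have hx := x.1.isLt
    have hy := y.1.isLt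
    simp only [jointCov, Matrix.of_apply]
    rw [part1 (x.1 + 1) (y.1 + 1) (by omega) (by omega) (by omega) (by omega)]
  refine ⟨hblocks, ?_⟩
  set A : ℕ → Matrix (Fin p) (Fin p) ℝ :=
    fun j => if j ≤ k then (Bmat n p σv Ψ (w j))⁻¹ else 0 with hA
  have hdetfac : (jointCov n p σv σv Ψ w k).det
      = ∏ c : Fin k, (A ((c : ℕ) + 1) - A ((c : ℕ) + 2)).det := by
    have hM : jointCov n p σv σv Ψ w k =
        Matrix.of fun (x y : Fin k × Fin p) => A (max x.1.1 y.1.1 + 1) x.2 y.2 := by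
      rw [hblocks]
      ext x y
      have hx := x.1.isLt
      have hy := y.1.isLt
      simp only [Matrix.of_apply, hA]
      have hmx : max ((x.1 : ℕ) + 1) ((y.1 : ℕ) + 1) = max (x.1 : ℕ) (y.1 : ℕ) + 1 := by
        omega
      rw [hmx, if_pos (by omega : max (x.1 : ℕ) (y.1 : ℕ) + 1 ≤ k)]
    rw [hM, SpatialAdaptAux.det_max_block A (by simp only [hA]; rw [if_neg (by omega)])]
  have hprod : ∏ c : Fin k, (A ((c : ℕ) + 1) - A ((c : ℕ) + 2)).det
      = (Bmat n p σv Ψ (w k))⁻¹.det *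
          ∏ l ∈ Finset.Icc 2 k,
            ((Bmat n p σv Ψ (w (l - 1)))⁻¹ - (Bmat n p σv Ψ (w l))⁻¹).det := by
    rw [Fin.prod_univ_eq_prod_range (fun c => (A (c + 1) - A (c + 2)).det) k]
    have hk' : k = (k - 1) + 1 := by omega
    conv_lhs => rw [hk']
    rw [Finset.prod_range_succ]
    have hlast : A ((k - 1) + 1) - A ((k - 1) + 2) = (Bmat n p σv Ψ (w k))⁻¹ := by
      have e1 : k - 1 + 1 = k := by omega
      have e2 : k - 1 + 2 = k + 1 := by omega
      rw [e1, e2]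
      simp only [hA]
      rw [if_pos le_rfl, if_neg (by omega), sub_zero]
    rw [hlast, show Finset.Icc 2 k = Finset.Ico 2 (k + 1) from (Finset.Ico_add_one_right_eq_Icc 2 k).symm,
      Finset.prod_Ico_eq_prod_range]
    have e3 : k + 1 - 2 = k - 1 := by omega
    rw [e3, mul_comm]
    congr 1
    refine Finset.prod_congr rfl fun c hc => ?_
    have hck : c < k - 1 := Finset.mem_range.mp hc
    have e4 : 2 + c - 1 = c + 1 := by omega
    have e5 : 2 + c = c + 2 := by omega
    rw [e4, e5]
    simp only [hA]
    rw [if_pos (by omega), if_pos (by omega)]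
  have hdeteq : (jointCov n p σv σv Ψ w k).det
      = (Bmat n p σv Ψ (w k))⁻¹.det *
          ∏ l ∈ Finset.Icc 2 k,
            ((Bmat n p σv Ψ (w (l - 1)))⁻¹ - (Bmat n p σv Ψ (w l))⁻¹).det := by
    rw [hdetfac, hprod]
  have hpos : 0 < (jointCov n p σv σv Ψ w k).det := by
    rw [hdeteq]
    apply mul_pos
    · exact (hB k hk1 hkK).inv.det_pos
    · apply Finset.prod_pos
      intro l hl
      obtain ⟨hl2, hlk⟩ := Finset.mem_Icc.mp hl
      exact (hΔpos l hl2 (le_trans hlk hkK)).det_pos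
  exact ⟨hdeteq, hpos, hpos.ne'.isUnit⟩


end SpatialAdapt
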